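/- Let m be a positive integer, let W be a multiset of 3m positive integers, assume m divides ∑ W, and set sum = (∑ W)/m. Let G = m·K_{1,3} be the disjoint union of m copies of the star K_{1,3}, and let S = W ⊎ {sum repeated m times}. Then G is S-fair if and only if W can be partitioned into m multisets W_1, …, W_m, each of size 3, such that ∑ W_i = sum for every i ∈ [m]. -/

import Mathlib

open scoped Classical

/-- Sum of labels over the open neighborhood of `v`. -/
noncomputable def nbrSum {V : Type*} [Fintype V] (G : SimpleGraph V) (f : V → ℕ) (v : V) : ℕ :=
  ∑ u : V, if G.Adj v u then f u else 0

/-- `f` is a bijective labeling of `G` by the multiset `S` witnessing fairness constant `k`. -/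
def IsFairLabeling {V : Type*} [Fintype V] (G : SimpleGraph V) (S : Multiset ℕ)
    (f : V → ℕ) (k : ℕ) : Prop :=
  Finset.univ.val.map f = S ∧ ∀ v : V, nbrSum G f v = k

/-- `G` is `S`-fair. -/
def IsFair {V : Type*} [Fintype V] (G : SimpleGraph V) (S : Multiset ℕ) : Prop :=
  ∃ (f : V → ℕ) (k : ℕ), IsFairLabeling G S f k

/-- The disjoint union of `t` vertex-disjoint copies of the graph `H`. -/
def copies (t : ℕ) {W : Type*} (H : SimpleGraph W) : SimpleGraph (Fin t × W) where
  Adj x y := x.1 = y.1 ∧ H.Adj x.2 y.2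
  symm := ⟨fun _ _ h => ⟨h.1.symm, h.2.symm⟩⟩
  loopless := ⟨fun x h => H.loopless.irrefl x.2 h.2⟩

lemma nbr_leaf (m : ℕ) (f : Fin m × (Fin 1 ⊕ Fin 3) → ℕ) (i : Fin m) (j : Fin 3) :
    nbrSum (copies m (completeBipartiteGraph (Fin 1) (Fin 3))) f (i, Sum.inr j) = f (i, Sum.inl 0) := by
  unfold nbrSum
  rw [Fintype.sum_prod_type]
  simp [copies, completeBipartiteGraph, Fintype.sum_sum_type]

lemma nbr_center (m : ℕ) (f : Fin m × (Fin 1 ⊕ Fin 3) → ℕ) (i : Fin m) (a : Fin 1) :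
    nbrSum (copies m (completeBipartiteGraph (Fin 1) (Fin 3))) f (i, Sum.inl a) = ∑ j : Fin 3, f (i, Sum.inr j) := by
  unfold nbrSum
  rw [Fintype.sum_prod_type]
  simp [copies, completeBipartiteGraph, Fintype.sum_sum_type]

lemma exists_fn {n : ℕ} (s : Multiset ℕ) (h : Multiset.card s = n) :
    ∃ g : Fin n → ℕ, Finset.univ.val.map g = s := by
  induction s using Quotient.inductionOn with
  | h l =>
    simp at h
    subst h
    exact ⟨l.get, by rw [Fin.univ_val_map, List.ofFn_get]; rfl⟩

lemma map_univ_eq {V : Type*} [Fintype V] (f : V → ℕ) :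
    (Finset.univ.val.map f) = ∑ x : V, ({f x} : Multiset ℕ) := by
  rw [Finset.sum_eq_multiset_sum]
  generalize (Finset.univ.val : Multiset V) = s
  induction s using Multiset.induction with
  | empty => simp
  | cons a s ih => simp [ih]

lemma map_decomp (m : ℕ) (f : Fin m × (Fin 1 ⊕ Fin 3) → ℕ) :
    (Finset.univ.val.map f : Multiset ℕ) =
      ∑ i : Fin m, ({f (i, Sum.inl 0)} + Finset.univ.val.map (fun j : Fin 3 => f (i, Sum.inr j))) := by
  rw [map_univ_eq]
  rw [Fintype.sum_prod_type]
  refine Finset.sum_congr rfl fun i _ => ?_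
  rw [Fintype.sum_sum_type, Fin.sum_univ_one, map_univ_eq]

lemma sum_singleton_const (m : ℕ) (c : ℕ) :
    (∑ _i : Fin m, ({c} : Multiset ℕ)) = Multiset.replicate m c := by
  induction m with
  | zero => simp
  | succ n ih => rw [Fin.sum_univ_succ, ih, Multiset.replicate_succ]; rfl

/-- with `W` a multiset of `3m` positive integers such that `m ∣ ∑ W` and
`sum = (∑ W)/m`, the disjoint union of `m` copies of the star `K_{1,3}` is
`(W ⊎ {sum, …, sum})`-fair (with `sum` repeated `m` times) iff `W` partitions into `m`
triples each of sum `sum`. -/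
theorem stmt_12 (m : ℕ) (hm : 0 < m)
    (W : Multiset ℕ) (hWpos : ∀ w ∈ W, 0 < w) (hWcard : Multiset.card W = 3 * m)
    (hdvd : m ∣ W.sum) :
    IsFair (copies m (completeBipartiteGraph (Fin 1) (Fin 3)))
        (W + Multiset.replicate m (W.sum / m)) ↔
      ∃ P : Fin m → Multiset ℕ,
        (∑ i : Fin m, P i) = W ∧
        (∀ i : Fin m, Multiset.card (P i) = 3) ∧
        (∀ i : Fin m, (P i).sum = W.sum / m) := by
  constructor
  · rintro ⟨f, k, hmap, hfair⟩
    have hc : ∀ i : Fin m, f (i, Sum.inl 0) = k := fun i => by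
      have h := hfair (i, Sum.inr 0); rwa [nbr_leaf] at h
    have hl : ∀ i : Fin m, ∑ j : Fin 3, f (i, Sum.inr j) = k := fun i => by
      have h := hfair (i, Sum.inl 0); rwa [nbr_center] at h
    set P : Fin m → Multiset ℕ :=
      fun i => Finset.univ.val.map (fun j : Fin 3 => f (i, Sum.inr j)) with hP
    have hPsum : ∀ i, (P i).sum = k := fun i => by
      rw [hP, ← Finset.sum_eq_multiset_sum]; exact hl i
    have hPcard : ∀ i, Multiset.card (P i) = 3 := fun i => by simp [hP]
    have hdec : W + Multiset.replicate m (W.sum / m) = Multiset.replicate m k + ∑ i : Fin m, P i := by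
      rw [← hmap, map_decomp, Finset.sum_add_distrib]
      congr 1
      · simp only [hc]; exact sum_singleton_const m k
    have hsums := congrArg Multiset.sum hdec
    rw [Multiset.sum_add, Multiset.sum_add, Multiset.sum_replicate, Multiset.sum_replicate,
      smul_eq_mul, smul_eq_mul, Nat.mul_div_cancel' hdvd] at hsums
    have hsumP : (∑ i : Fin m, P i).sum = ∑ i : Fin m, (P i).sum := by
      induction (Finset.univ : Finset (Fin m)) using Finset.cons_induction with
      | empty => simp
      | cons a s ha ih => simp [Finset.sum_insert ha, Multiset.sum_add, ih]
    rw [hsumP] at hsums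
    have : ∀ i : Fin m, (P i).sum = k := hPsum
    rw [Finset.sum_congr rfl fun i _ => hPsum i, Finset.sum_const, Finset.card_univ,
      Fintype.card_fin, smul_eq_mul] at hsums
    have hk : m * k = W.sum := by omega
    have hkdiv : k = W.sum / m := by rw [← hk, Nat.mul_div_cancel_left _ hm]
    refine ⟨P, ?_, hPcard, fun i => (hPsum i).trans hkdiv⟩
    rw [hkdiv] at hdec
    rw [add_comm W] at hdec
    exact (add_left_cancel hdec).symm
  · rintro ⟨P, hPW, hPcard, hPsum⟩
    choose g hg using fun i => exists_fn (P i) (hPcard i)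
    refine ⟨fun x => Sum.elim (fun _ => W.sum / m) (g x.1) x.2, W.sum / m, ?_, ?_⟩
    · rw [map_decomp, Finset.sum_add_distrib]
      simp only [Sum.elim_inl, Sum.elim_inr]
      rw [sum_singleton_const]
      have : (∑ i : Fin m, Finset.univ.val.map (g i)) = W := by
        rw [← hPW]; exact Finset.sum_congr rfl fun i _ => hg i
      rw [this, add_comm]
    · rintro ⟨i, w⟩
      cases w with
      | inl a =>
        rw [nbr_center]
        simp only [Sum.elim_inr]
        rw [← hPsum i, ← hg i, Finset.sum_eq_multiset_sum]
      | inr j =>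
        rw [nbr_leaf]
        simp
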